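/- arXiv:1903.07979 — 2 statements merged into one kernel-verified Lean document; each statement's English description precedes it below -/
import Mathlib

section
/- For every m ≥ 0, B_4^(m) = (6m³ + 13m² + 9m + 2)/2. -/
/-- Stirling numbers of the second kind. -/
def stirling : ℕ → ℕ → ℕ
  | 0, 0 => 1
  | 0, _ + 1 => 0
  | _ + 1, 0 => 0
  | n + 1, k + 1 => (k + 1) * stirling n (k + 1) + stirling n k

/-- Higher order Bell numbers: `higherBell m n` is `B_n^(m)`. -/
def higherBell : ℕ → ℕ → ℕ
  | 0, _ => 1
  | _ + 1, 0 => 1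
  | m + 1, n + 1 => ∑ k ∈ Finset.Icc 1 (n + 1), higherBell m k * stirling (n + 1) k

lemma hb1 (m : ℕ) : higherBell m 1 = 1 := by
  induction m with
  | zero => rfl
  | succ m ih =>
    show (∑ k ∈ Finset.Icc 1 1, higherBell m k * stirling 1 k) = 1
    simp [ih, stirling]

lemma hb2 (m : ℕ) : higherBell m 2 = m + 1 := by
  induction m with
  | zero => rfl
  | succ m ih =>
    show (∑ k ∈ Finset.Icc 1 2, higherBell m k * stirling 2 k) = m + 1 + 1
    have : Finset.Icc 1 2 = {1, 2} := by decide
    rw [this]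
    simp [Finset.sum_insert, hb1, ih, stirling]
    ring

lemma hb3 (m : ℕ) : 2 * higherBell m 3 = 3 * m ^ 2 + 5 * m + 2 := by
  induction m with
  | zero => rfl
  | succ m ih =>
    show 2 * (∑ k ∈ Finset.Icc 1 3, higherBell m k * stirling 3 k) = _
    have : Finset.Icc 1 3 = {1, 2, 3} := by decide
    rw [this, Finset.sum_insert (by decide), Finset.sum_insert (by decide),
      Finset.sum_singleton, hb1, hb2]
    show 2 * (1 * stirling 3 1 + ((m + 1) * stirling 3 2 + higherBell m 3 * stirling 3 3)) = _
    have s1 : stirling 3 1 = 1 := by decide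
    have s2 : stirling 3 2 = 3 := by decide
    have s3 : stirling 3 3 = 1 := by decide
    rw [s1, s2, s3]
    ring_nf
    ring_nf at ih
    omega

lemma hb4 (m : ℕ) : 2 * higherBell m 4 = 6 * m ^ 3 + 13 * m ^ 2 + 9 * m + 2 := by
  induction m with
  | zero => rfl
  | succ m ih =>
    show 2 * (∑ k ∈ Finset.Icc 1 4, higherBell m k * stirling 4 k) = _
    have : Finset.Icc 1 4 = {1, 2, 3, 4} := by decide
    rw [this]
    rw [Finset.sum_insert (by decide), Finset.sum_insert (by decide),
      Finset.sum_insert (by decide), Finset.sum_singleton]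
    have s1 : stirling 4 1 = 1 := by decide
    have s2 : stirling 4 2 = 7 := by decide
    have s3 : stirling 4 3 = 6 := by decide
    have s4 : stirling 4 4 = 1 := by decide
    rw [s1, s2, s3, s4, hb1, hb2]
    have h3 := hb3 m
    ring_nf
    ring_nf at ih h3
    omega

theorem stmt4 (m : ℕ) :
    (higherBell m 4 : ℚ) = (6 * m ^ 3 + 13 * m ^ 2 + 9 * m + 2) / 2 := by
  have h := hb4 m
  have : (2 * higherBell m 4 : ℚ) = 6 * m ^ 3 + 13 * m ^ 2 + 9 * m + 2 := by
    exact_mod_cast h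
  push_cast at this
  linarith
end

section
/- For each fixed n ≥ 1, there exist rational numbers c_0, c_1, ..., c_{n-1} (independent of m) such that B_n^(m) = c_{n-1} m^{n-1} + c_{n-2} m^{n-2} + ... + c_1 m + c_0 for all m ≥ 0. Equivalently, for each n ≥ 1 there exists a polynomial P_n ∈ ℚ[X] of degree at most n-1 with B_n^(m) = P_n(m) for all natural numbers m. -/
open Polynomial Finset

lemma stirling_eq_zero_of_lt : ∀ {n k : ℕ}, n < k → stirling n k = 0 := by
  intro n
  induction n with
  | zero => intro k hk; cases k with
    | zero => omega
    | succ k => rfl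
  | succ n ih =>
    intro k hk
    cases k with
    | zero => omega
    | succ k =>
      have h1 : stirling n (k + 1) = 0 := ih (by omega)
      have h2 : stirling n k = 0 := ih (by omega)
      simp [stirling, h1, h2]

lemma stirling_self : ∀ n : ℕ, stirling n n = 1 := by
  intro n
  induction n with
  | zero => rfl
  | succ n ih =>
    have h1 : stirling n (n + 1) = 0 := stirling_eq_zero_of_lt (by omega)
    simp [stirling, h1, ih]

lemma natDegree_bernoulli_le (n : ℕ) : (Polynomial.bernoulli n).natDegree ≤ n := by
  rw [Polynomial.bernoulli]
  apply Polynomial.natDegree_sum_le_of_forall_le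
  intro i hi
  exact (Polynomial.natDegree_monomial_le _).trans (by omega)

/-- antidifference of a polynomial -/
lemma antidiff (Q : ℚ[X]) : ∃ R : ℚ[X], R.natDegree ≤ Q.natDegree + 1 ∧
    ∀ x : ℚ, R.eval (x + 1) - R.eval x = Q.eval x := by
  refine ⟨∑ i ∈ range (Q.natDegree + 1),
      Polynomial.C (Q.coeff i / (i + 1)) * Polynomial.bernoulli (i + 1), ?_, ?_⟩
  · apply Polynomial.natDegree_sum_le_of_forall_le
    intro i hi
    refine (Polynomial.natDegree_mul_le).trans ?_
    have := natDegree_bernoulli_le (i + 1)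
    have := Polynomial.natDegree_C (Q.coeff i / (i + 1 : ℚ))
    simp only [Finset.mem_range] at hi
    omega
  · intro x
    rw [Polynomial.eval_finset_sum, Polynomial.eval_finset_sum, ← Finset.sum_sub_distrib]
    have : ∀ i ∈ range (Q.natDegree + 1),
        (Polynomial.C (Q.coeff i / (i + 1)) * Polynomial.bernoulli (i + 1)).eval (x + 1) -
        (Polynomial.C (Q.coeff i / (i + 1)) * Polynomial.bernoulli (i + 1)).eval x
        = Q.coeff i * x ^ i := by
      intro i _
      have hb := Polynomial.bernoulli_eval_one_add (i + 1) x
      rw [add_comm (1 : ℚ) x] at hb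
      simp only [Polynomial.eval_mul, Polynomial.eval_C]
      rw [← mul_sub, hb]
      have h1 : ((i : ℚ) + 1) ≠ 0 := by positivity
      push_cast
      field_simp
      ring
    rw [Finset.sum_congr rfl this]
    rw [Polynomial.eval_eq_sum_range]

/-- If the forward difference of `f` is given by a polynomial `Q`, then `f` is polynomial
of degree at most `Q.natDegree + 1`. -/
lemma poly_of_diff (f : ℕ → ℚ) (Q : ℚ[X]) (h : ∀ m : ℕ, f (m + 1) = f m + Q.eval (m : ℚ)) :
    ∃ P : ℚ[X], P.natDegree ≤ Q.natDegree + 1 ∧ ∀ m : ℕ, f m = P.eval (m : ℚ) := by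
  obtain ⟨R, hRd, hR⟩ := antidiff Q
  refine ⟨R + Polynomial.C (f 0 - R.eval 0), ?_, ?_⟩
  · refine (Polynomial.natDegree_add_le _ _).trans ?_
    simp only [Polynomial.natDegree_C]
    omega
  · intro m
    induction m with
    | zero => simp
    | succ m ih =>
      have := hR (m : ℚ)
      push_cast
      simp only [Polynomial.eval_add, Polynomial.eval_C] at ih ⊢
      rw [h m, ih]
      linarith

theorem stmt5 (n : ℕ) (hn : 1 ≤ n) :
    ∃ P : Polynomial ℚ, P.natDegree ≤ n - 1 ∧
      ∀ m : ℕ, (higherBell m n : ℚ) = P.eval (m : ℚ) := by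
  induction n using Nat.strong_induction_on with
  | _ n ih =>
  match n, hn with
  | 1, _ =>
    refine ⟨1, by simp, ?_⟩
    intro m
    have : ∀ m : ℕ, higherBell m 1 = 1 := by
      intro m
      induction m with
      | zero => rfl
      | succ m ihm =>
        show (∑ k ∈ Finset.Icc 1 1, higherBell m k * stirling 1 k) = 1
        simp [ihm, stirling_self 1]
    simp [this m]
  | (n' + 2), _ =>
    set n := n' + 2 with hn2
    -- polynomials for smaller indices
    choose P hPd hPe using fun (k : ℕ) (hk : k < n) (h1 : 1 ≤ k) => ih k hk h1
    -- difference polynomial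
    set Q : ℚ[X] := ∑ k ∈ (Finset.Icc 1 (n' + 1)).attach,
      P k.1 (by have := Finset.mem_Icc.mp k.2; omega) (by have := Finset.mem_Icc.mp k.2; omega)
        * Polynomial.C ((stirling n k.1 : ℚ)) with hQ
    have hQd : Q.natDegree ≤ n' := by
      apply Polynomial.natDegree_sum_le_of_forall_le
      intro k hk
      refine (Polynomial.natDegree_mul_le).trans ?_
      have h1 := hPd k.1 (by have := Finset.mem_Icc.mp k.2; omega)
        (by have := Finset.mem_Icc.mp k.2; omega)
      have h2 := Finset.mem_Icc.mp k.2
      simp only [Polynomial.natDegree_C]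
      omega
    have hdiff : ∀ m : ℕ, ((higherBell (m + 1) n : ℚ)) = higherBell m n + Q.eval (m : ℚ) := by
      intro m
      show ((∑ k ∈ Finset.Icc 1 (n' + 1 + 1), higherBell m k * stirling (n' + 1 + 1) k : ℕ) : ℚ)
        = _
      have hins : Finset.Icc 1 (n' + 1 + 1) = insert (n' + 1 + 1) (Finset.Icc 1 (n' + 1)) := by
        ext x; simp [Finset.mem_Icc]; omega
      rw [hins, Finset.sum_insert (by simp)]
      have hself : stirling (n' + 1 + 1) (n' + 1 + 1) = 1 := stirling_self _
      rw [hself]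
      push_cast
      rw [hQ, Polynomial.eval_finset_sum]
      rw [← Finset.sum_attach (Finset.Icc 1 (n' + 1))
        (fun k => ((higherBell m k : ℚ)) * (stirling (n' + 1 + 1) k : ℚ))]
      congr 1
      · ring
      · apply Finset.sum_congr rfl
        intro k _
        rw [Polynomial.eval_mul, Polynomial.eval_C]
        rw [← hPe k.1 (by have := Finset.mem_Icc.mp k.2; omega)
          (by have := Finset.mem_Icc.mp k.2; omega) m]
    obtain ⟨Pn, hPnd, hPne⟩ := poly_of_diff (fun m => (higherBell m n : ℚ)) Q hdiff
    exact ⟨Pn, by omega, hPne⟩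
end
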